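/- For all real numbers x and x₀ with x₀ ≠ 0, log(1 + exp(x)) ≤ log(1 + exp(x₀)) + (x − x₀)/2 + (tanh(x₀/2)/(4·x₀))·(x² − x₀²). (This is the quadratic tangent bound underlying the Pólya-Gamma EM minorization of the logistic log-likelihood.) -/

import Mathlib

open Real Set

private lemma aux_sinh_le (a : ℝ) (ha : 0 ≤ a) : Real.sinh a ≤ a * Real.cosh a := by
  have key : MonotoneOn (fun u : ℝ => u * Real.cosh u - Real.sinh u) (Ici 0) := by
    apply monotoneOn_of_deriv_nonneg (convex_Ici 0)
    · exact (continuous_id.mul Real.continuous_cosh).sub Real.continuous_sinh |>.continuousOn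
    · intro u _
      have hd : HasDerivAt (fun v : ℝ => v * Real.cosh v - Real.sinh v)
          (1 * Real.cosh u + u * Real.sinh u - Real.cosh u) u :=
        ((hasDerivAt_id u).mul (Real.hasDerivAt_cosh u)).sub (Real.hasDerivAt_sinh u)
      exact hd.differentiableAt.differentiableWithinAt
    · intro u hu
      rw [interior_Ici] at hu
      have hd : HasDerivAt (fun v : ℝ => v * Real.cosh v - Real.sinh v)
          (1 * Real.cosh u + u * Real.sinh u - Real.cosh u) u :=
        ((hasDerivAt_id u).mul (Real.hasDerivAt_cosh u)).sub (Real.hasDerivAt_sinh u)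
      rw [hd.deriv]
      have : 0 ≤ u * Real.sinh u := mul_nonneg (le_of_lt hu) (Real.sinh_nonneg_iff.mpr (le_of_lt hu))
      linarith
  have h := key (self_mem_Ici) (mem_Ici.mpr ha) ha
  simp at h
  linarith

private lemma aux_sinh_ratio (a b : ℝ) (ha : 0 ≤ a) (hab : a ≤ b) :
    b * Real.sinh a ≤ a * Real.sinh b := by
  have key : MonotoneOn (fun u : ℝ => a * Real.sinh u - u * Real.sinh a) (Ici a) := by
    apply monotoneOn_of_deriv_nonneg (convex_Ici a)
    · exact ((continuous_const.mul Real.continuous_sinh).sub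
        (continuous_id.mul continuous_const)).continuousOn
    · intro u _
      have hd : HasDerivAt (fun v : ℝ => a * Real.sinh v - v * Real.sinh a)
          (a * Real.cosh u - 1 * Real.sinh a) u :=
        ((Real.hasDerivAt_sinh u).const_mul a).sub ((hasDerivAt_id u).mul_const (Real.sinh a))
      exact hd.differentiableAt.differentiableWithinAt
    · intro u hu
      rw [interior_Ici] at hu
      have hd : HasDerivAt (fun v : ℝ => a * Real.sinh v - v * Real.sinh a)
          (a * Real.cosh u - 1 * Real.sinh a) u :=
        ((Real.hasDerivAt_sinh u).const_mul a).sub ((hasDerivAt_id u).mul_const (Real.sinh a))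
      rw [hd.deriv]
      have hcc : Real.cosh a ≤ Real.cosh u := by
        rw [Real.cosh_le_cosh, abs_of_nonneg ha, abs_of_nonneg (le_trans ha (le_of_lt hu))]
        exact le_of_lt hu
      have h1 : Real.sinh a ≤ a * Real.cosh a := aux_sinh_le a ha
      have : a * Real.cosh a ≤ a * Real.cosh u := by nlinarith
      linarith
  have h := key (self_mem_Ici) (mem_Ici.mpr hab) hab
  simp only at h
  nlinarith [h]

private lemma aux_prod (s t : ℝ) (hs : 0 ≤ s) (hst : s ≤ t) :
    s * Real.sinh t * Real.cosh s ≤ t * Real.sinh s * Real.cosh t := by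
  have h := aux_sinh_ratio (t - s) (t + s) (by linarith) (by linarith)
  rw [Real.sinh_sub, Real.sinh_add] at h
  nlinarith [h]

/-- derivative fact -/
private lemma aux_hasDeriv (c u : ℝ) :
    HasDerivAt (fun v : ℝ => c / 2 * v ^ 2 - Real.log (Real.cosh v))
      (c * u - Real.sinh u / Real.cosh u) u := by
  have h1 : HasDerivAt (fun v : ℝ => c / 2 * v ^ 2) (c * u) u := by
    have := (hasDerivAt_pow 2 u).const_mul (c / 2)
    refine this.congr_deriv ?_
    push_cast
    ring
  have h2 : HasDerivAt (fun v : ℝ => Real.log (Real.cosh v))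
      (Real.sinh u / Real.cosh u) u :=
    (Real.hasDerivAt_cosh u).log (Real.cosh_pos u).ne'
  exact h1.sub h2

/-- main lemma for nonnegative arguments -/
private lemma aux_main (t₀ t : ℝ) (ht₀ : 0 < t₀) (ht : 0 ≤ t) :
    Real.log (Real.cosh t) ≤ Real.log (Real.cosh t₀)
      + Real.sinh t₀ / Real.cosh t₀ / (2 * t₀) * (t ^ 2 - t₀ ^ 2) := by
  set c : ℝ := Real.sinh t₀ / Real.cosh t₀ / t₀ with hc
  have hF : ∀ u : ℝ, HasDerivAt (fun v : ℝ => c / 2 * v ^ 2 - Real.log (Real.cosh v))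
      (c * u - Real.sinh u / Real.cosh u) u := aux_hasDeriv c
  have hrw : ∀ u : ℝ, c * u - Real.sinh u / Real.cosh u
      = (u * Real.sinh t₀ * Real.cosh u - t₀ * Real.sinh u * Real.cosh t₀)
        / (t₀ * Real.cosh t₀ * Real.cosh u) := by
    intro u
    rw [hc]
    field_simp
  have key : c / 2 * t₀ ^ 2 - Real.log (Real.cosh t₀)
      ≤ c / 2 * t ^ 2 - Real.log (Real.cosh t) := by
    rcases le_total t₀ t with h | h
    · have mono : MonotoneOn (fun v : ℝ => c / 2 * v ^ 2 - Real.log (Real.cosh v)) (Icc t₀ t) := by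
        apply monotoneOn_of_deriv_nonneg (convex_Icc t₀ t)
        · exact Continuous.continuousOn ((continuous_const.mul (continuous_pow 2)).sub
            (Real.continuous_cosh.log fun v => (Real.cosh_pos v).ne'))
        · intro u _; exact (hF u).differentiableAt.differentiableWithinAt
        · intro u hu
          rw [interior_Icc] at hu
          rw [(hF u).deriv, hrw u]
          have hp := aux_prod t₀ u (le_of_lt ht₀) (le_of_lt hu.1)
          have hden : 0 < t₀ * Real.cosh t₀ * Real.cosh u := by positivity
          exact div_nonneg (by linarith) (le_of_lt hden)
      exact mono (left_mem_Icc.mpr h) (right_mem_Icc.mpr h) h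
    · have anti : AntitoneOn (fun v : ℝ => c / 2 * v ^ 2 - Real.log (Real.cosh v)) (Icc t t₀) := by
        apply antitoneOn_of_deriv_nonpos (convex_Icc t t₀)
        · exact Continuous.continuousOn ((continuous_const.mul (continuous_pow 2)).sub
            (Real.continuous_cosh.log fun v => (Real.cosh_pos v).ne'))
        · intro u _; exact (hF u).differentiableAt.differentiableWithinAt
        · intro u hu
          rw [interior_Icc] at hu
          rw [(hF u).deriv, hrw u]
          have hu0 : 0 ≤ u := le_trans ht (le_of_lt hu.1)
          have hp := aux_prod u t₀ hu0 (le_of_lt hu.2)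
          have hden : 0 < t₀ * Real.cosh t₀ * Real.cosh u := by positivity
          exact div_nonpos_of_nonpos_of_nonneg (by linarith) (le_of_lt hden)
      exact anti (left_mem_Icc.mpr h) (right_mem_Icc.mpr h) h
  have heq : Real.sinh t₀ / Real.cosh t₀ / (2 * t₀) * (t ^ 2 - t₀ ^ 2)
      = c / 2 * t ^ 2 - c / 2 * t₀ ^ 2 := by
    rw [hc]; field_simp
  linarith [key, heq.ge, heq.le]

/-- sign-free version -/
private lemma aux_main' (t₀ t : ℝ) (ht₀ : t₀ ≠ 0) :
    Real.log (Real.cosh t) ≤ Real.log (Real.cosh t₀)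
      + Real.tanh t₀ / (2 * t₀) * (t ^ 2 - t₀ ^ 2) := by
  have h := aux_main |t₀| |t| (abs_pos.mpr ht₀) (abs_nonneg t)
  rw [Real.cosh_abs, Real.cosh_abs, sq_abs, sq_abs] at h
  have heq : Real.sinh |t₀| / Real.cosh t₀ / (2 * |t₀|) = Real.tanh t₀ / (2 * t₀) := by
    rw [Real.tanh_eq_sinh_div_cosh]
    rcases abs_cases t₀ with ⟨h1, _⟩ | ⟨h1, _⟩
    · rw [h1]
    · rw [h1, Real.sinh_neg]
      have hc : Real.cosh t₀ ≠ 0 := (Real.cosh_pos t₀).ne'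
      field_simp
  rwa [heq] at h

theorem log_one_add_exp_quadratic_bound (x x₀ : ℝ) (hx₀ : x₀ ≠ 0) :
    Real.log (1 + Real.exp x) ≤ Real.log (1 + Real.exp x₀) + (x - x₀) / 2
      + (Real.tanh (x₀ / 2) / (4 * x₀)) * (x ^ 2 - x₀ ^ 2) := by
  have decomp : ∀ y : ℝ, Real.log (1 + Real.exp y)
      = y / 2 + Real.log 2 + Real.log (Real.cosh (y / 2)) := by
    intro y
    have h0 : Real.exp (y / 2) * Real.exp (y / 2) = Real.exp y := by
      rw [← Real.exp_add]; norm_num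
    have h1' : Real.exp (y / 2) * Real.exp (-(y / 2)) = 1 := by
      rw [← Real.exp_add]; simp
    have h1 : (1 : ℝ) + Real.exp y = Real.exp (y / 2) * (2 * Real.cosh (y / 2)) := by
      rw [Real.cosh_eq]
      nlinarith [h0, h1']
    rw [h1, Real.log_mul (Real.exp_pos _).ne' (by positivity), Real.log_exp,
      Real.log_mul (by norm_num) (Real.cosh_pos _).ne']
    ring
  rw [decomp x, decomp x₀]
  have h := aux_main' (x₀ / 2) (x / 2) (by simpa using hx₀)
  have heq : Real.tanh (x₀ / 2) / (2 * (x₀ / 2)) * ((x / 2) ^ 2 - (x₀ / 2) ^ 2)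
      = Real.tanh (x₀ / 2) / (4 * x₀) * (x ^ 2 - x₀ ^ 2) := by
    have h4 : (4 : ℝ) * x₀ ≠ 0 := by simp [hx₀]
    rw [show 2 * (x₀ / 2) = x₀ by ring, div_mul_eq_mul_div, div_mul_eq_mul_div,
      div_eq_div_iff hx₀ h4]
    ring
  rw [heq] at h
  linarith
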